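/- For every θ ∈ ℂ with θ ≠ 0, every β ∈ ℂ, every integer m ≥ 0, and every c with 0 < c < 1/|θ|, one has (2πi)^{-1} ∮_{|η|=c} (1 − θη)^{β} e^{θ/η} η^{m−1} dη = θ^m · Φ(−β, m+1; θ²) / m!. -/

import Mathlib

open Complex

/-- The Pochhammer symbol `(a)_m = a (a+1) ⋯ (a+m−1)`, with `(a)_0 = 1`. -/
noncomputable def pochhammer' (a : ℂ) (m : ℕ) : ℂ := ∏ k ∈ Finset.range m, (a + (k : ℂ))

/-- The confluent hypergeometric function `Φ(a, c; x)` with positive integer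
parameter `c`. -/
noncomputable def confluentHyp (a : ℂ) (c : ℕ) (x : ℂ) : ℂ :=
  ∑' n : ℕ, pochhammer' a n * x ^ n / (pochhammer' (c : ℂ) n * (n.factorial : ℂ))

open Metric


lemma CCI.re_pos {w : ℂ} (hw : ‖w‖ < 1) : 0 < (1 - w).re := by
  have h1 : w.re ≤ ‖w‖ := Complex.re_le_norm w
  simp only [Complex.sub_re, Complex.one_re]
  linarith

lemma CCI.abs_lt_one {θ z : ℂ} (hθ : θ ≠ 0) (hz : ‖z‖ < 1 / ‖θ‖) :
    ‖θ * z‖ < 1 := by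
  have hθ' : 0 < ‖θ‖ := norm_pos_iff.mpr hθ
  rw [norm_mul]
  calc ‖θ‖ * ‖z‖ < ‖θ‖ * (1 / ‖θ‖) :=
        mul_lt_mul_of_pos_left hz hθ'
    _ = 1 := by field_simp

lemma CCI.hasDerivAt_cpow_aux {θ z : ℂ} (h : 0 < (1 - θ * z).re) (w : ℂ) :
    HasDerivAt (fun z => (1 - θ * z) ^ w) (w * (1 - θ * z) ^ (w - 1) * (-θ)) z := by
  have h1 : HasDerivAt (fun z : ℂ => 1 - θ * z) (-θ) z := by
    simpa using ((hasDerivAt_id z).const_mul θ).const_sub 1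
  exact h1.cpow_const (Complex.mem_slitPlane_iff.mpr (Or.inl h))

lemma CCI.iteratedDeriv_cpow (θ β : ℂ) (hθ : θ ≠ 0) (k : ℕ) :
    ∀ z ∈ ball (0:ℂ) (1 / ‖θ‖),
      iteratedDeriv k (fun z => (1 - θ * z) ^ β) z
        = θ ^ k * pochhammer' (-β) k * (1 - θ * z) ^ (β - k) := by
  induction k with
  | zero => intro z hz; simp [pochhammer']
  | succ k ih =>
    intro z hz
    have hev : iteratedDeriv k (fun z => (1 - θ * z) ^ β)
        =ᶠ[nhds z] fun z => θ ^ k * pochhammer' (-β) k * (1 - θ * z) ^ (β - k) :=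
      Filter.eventuallyEq_of_mem (isOpen_ball.mem_nhds hz) ih
    rw [iteratedDeriv_succ, hev.deriv_eq]
    have hre : 0 < (1 - θ * z).re := CCI.re_pos (CCI.abs_lt_one hθ (mem_ball_zero_iff.mp hz))
    have hd := (CCI.hasDerivAt_cpow_aux hre (β - k)).const_mul (θ ^ k * pochhammer' (-β) k)
    rw [hd.deriv]
    have hp : pochhammer' (-β) (k + 1) = pochhammer' (-β) k * (-β + k) :=
      Finset.prod_range_succ _ _
    have he : β - (k : ℂ) - 1 = β - ((k : ℕ) + 1 : ℕ) := by push_cast; ring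
    rw [hp, ← he]
    ring

lemma CCI.hasSum_binomial (θ β : ℂ) (hθ : θ ≠ 0) {z : ℂ}
    (hz : ‖z‖ < 1 / ‖θ‖) :
    HasSum (fun k : ℕ => pochhammer' (-β) k * θ ^ k / (k.factorial : ℂ) * z ^ k)
      ((1 - θ * z) ^ β) := by
  have hθ' : 0 < ‖θ‖ := norm_pos_iff.mpr hθ
  have hr : 0 < 1 / ‖θ‖ := by positivity
  have hdiff : DifferentiableOn ℂ (fun z => (1 - θ * z) ^ β)
      (ball (0:ℂ) (1 / ‖θ‖)) := by
    intro w hw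
    have hre : 0 < (1 - θ * w).re := CCI.re_pos (CCI.abs_lt_one hθ (mem_ball_zero_iff.mp hw))
    exact ((CCI.hasDerivAt_cpow_aux hre β).differentiableAt).differentiableWithinAt
  have H := Complex.hasSum_taylorSeries_on_ball hdiff (mem_ball_zero_iff.mpr hz)
  refine H.congr_fun fun n => ?_
  rw [CCI.iteratedDeriv_cpow θ β hθ n 0 (mem_ball_self hr)]
  have hfac : ((n.factorial : ℂ)) ≠ 0 := by
    exact_mod_cast Nat.cast_ne_zero.mpr n.factorial_ne_zero
  simp only [smul_eq_mul, sub_zero, mul_zero, Complex.one_cpow]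
  rw [div_eq_mul_inv]
  ring


lemma CCI.summable_binomial_norm (θ β : ℂ) (hθ : θ ≠ 0) {c : ℝ} (hc0 : 0 < c)
    (hc : c < 1 / ‖θ‖) :
    Summable (fun k : ℕ =>
      ‖pochhammer' (-β) k * θ ^ k / (k.factorial : ℂ)‖ * c ^ k) := by
  set c' : ℝ := (c + 1 / ‖θ‖) / 2 with hc'def
  have hcc' : c < c' := by rw [hc'def]; linarith
  have hc'lt : c' < 1 / ‖θ‖ := by rw [hc'def]; linarith
  have hc'0 : 0 < c' := lt_trans hc0 hcc'
  have hza : ‖((c' : ℝ) : ℂ)‖ < 1 / ‖θ‖ := by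
    rwa [Complex.norm_real, Real.norm_of_nonneg hc'0.le]
  have hS := (CCI.hasSum_binomial θ β hθ hza).summable
  have htend : Filter.Tendsto
      (fun k : ℕ => ‖pochhammer' (-β) k * θ ^ k / (k.factorial : ℂ) * ((c' : ℝ) : ℂ) ^ k‖)
      Filter.atTop (nhds 0) := by
    simpa using hS.tendsto_atTop_zero.norm
  obtain ⟨M, hM⟩ := htend.bddAbove_range
  have hMb : ∀ k : ℕ,
      ‖pochhammer' (-β) k * θ ^ k / (k.factorial : ℂ)‖ * c' ^ k ≤ M := by
    intro k
    have := hM (Set.mem_range_self k)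
    rw [norm_mul, norm_pow, Complex.norm_real, Real.norm_of_nonneg hc'0.le] at this
    exact this
  have hgeo : Summable (fun k : ℕ => M * (c / c') ^ k) := by
    refine (summable_geometric_of_lt_one (by positivity) ?_).mul_left M
    rw [div_lt_one hc'0]; exact hcc'
  refine Summable.of_nonneg_of_le (fun k => by positivity) (fun k => ?_) hgeo
  have h2 : (c / c') ^ k * c' ^ k = c ^ k := by
    rw [div_pow, div_mul_cancel₀ _ (pow_ne_zero _ hc'0.ne')]
  have hkey : ‖pochhammer' (-β) k * θ ^ k / (k.factorial : ℂ)‖ * c ^ k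
      = (‖pochhammer' (-β) k * θ ^ k / (k.factorial : ℂ)‖ * c' ^ k) * (c / c') ^ k := by
    rw [← h2]; ring
  rw [hkey]
  exact mul_le_mul_of_nonneg_right (hMb k) (by positivity)

lemma CCI.summable_exp_norm (θ : ℂ) {c : ℝ} (hc0 : 0 < c) :
    Summable (fun n : ℕ => ‖θ ^ n / (n.factorial : ℂ)‖ * c ^ (-(n : ℤ))) := by
  have heq : ∀ n : ℕ, ‖θ ^ n / (n.factorial : ℂ)‖ * c ^ (-(n : ℤ))
      = (‖θ‖ / c) ^ n / (n.factorial : ℝ) := by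
    intro n
    rw [norm_div, norm_pow, Complex.norm_natCast, zpow_neg, zpow_natCast, div_pow]
    have h1 : (0:ℝ) < (n.factorial : ℝ) := by exact_mod_cast n.factorial_pos
    field_simp
  rw [funext heq]
  exact Real.summable_pow_div_factorial _

lemma CCI.pochhammer_factorial (m : ℕ) :
    ∀ k : ℕ, pochhammer' ((m + 1 : ℕ) : ℂ) k * (m.factorial : ℂ) = ((m + k).factorial : ℂ) := by
  intro k
  induction k with
  | zero => simp [pochhammer']
  | succ k ih =>
    have hstep : pochhammer' ((m + 1 : ℕ) : ℂ) (k + 1)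
        = pochhammer' ((m + 1 : ℕ) : ℂ) k * (((m + 1 : ℕ) : ℂ) + k) :=
      Finset.prod_range_succ _ _
    have hfac : ((m + (k + 1)).factorial : ℂ) = ((m + k + 1 : ℕ) : ℂ) * ((m + k).factorial : ℂ) := by
      have : m + (k + 1) = (m + k) + 1 := by ring
      rw [this, Nat.factorial_succ]
      push_cast
      ring
    rw [hstep, hfac]
    push_cast
    push_cast at ih
    linear_combination ((m : ℂ) + 1 + k) * ih

lemma CCI.pochhammer_nat_ne_zero (m : ℕ) (k : ℕ) : pochhammer' ((m + 1 : ℕ) : ℂ) k ≠ 0 := by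
  intro h
  have := CCI.pochhammer_factorial m k
  rw [h, zero_mul] at this
  exact (Nat.cast_ne_zero.mpr (m + k).factorial_ne_zero) this.symm

set_option maxHeartbeats 1000000 in
theorem confluent_contour_integral'
    (θ : ℂ) (hθ : θ ≠ 0) (β : ℂ) (m : ℕ) (c : ℝ)
    (hc0 : 0 < c) (hc : c < 1 / ‖θ‖) :
    (2 * Real.pi * Complex.I)⁻¹ *
        (∮ η in C(0, c),
          (1 - θ * η) ^ β * Complex.exp (θ / η) * η ^ ((m : ℤ) - 1)) =
      θ ^ m * confluentHyp (-β) (m + 1) (θ ^ 2) / (m.factorial : ℂ) := by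
  have hθa : 0 < ‖θ‖ := norm_pos_iff.mpr hθ
  set a : ℕ → ℂ := fun k => pochhammer' (-β) k * θ ^ k / (k.factorial : ℂ) with ha
  set b : ℕ → ℂ := fun n => θ ^ n / (n.factorial : ℂ) with hb
  set jj : ℕ × ℕ → ℤ := fun p => (p.1 : ℤ) + m - 1 - p.2 with hjj
  have habs : ∀ t : ℝ, ‖circleMap 0 c t‖ = c := fun t => by
    rw [norm_circleMap_zero, abs_of_pos hc0]
  have hne : ∀ t : ℝ, circleMap 0 c t ≠ 0 := fun t => circleMap_ne_center hc0.ne'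
  have hEa : Summable (fun k : ℕ => ‖a k‖ * c ^ k) :=
    CCI.summable_binomial_norm θ β hθ hc0 hc
  have hEb : Summable (fun n : ℕ => ‖b n‖ * c ^ (-(n : ℤ))) :=
    CCI.summable_exp_norm θ hc0
  -- pointwise expansion on the circle
  have hpt : ∀ η : ℂ, ‖η‖ = c →
      HasSum (fun p : ℕ × ℕ => a p.1 * b p.2 * η ^ (jj p))
        ((1 - θ * η) ^ β * Complex.exp (θ / η) * η ^ ((m : ℤ) - 1)) := by
    intro η hη
    have hη0 : η ≠ 0 := by
      intro h
      rw [h, norm_zero] at hη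
      exact hc0.ne hη
    have hA : HasSum (fun k : ℕ => a k * η ^ k) ((1 - θ * η) ^ β) :=
      CCI.hasSum_binomial θ β hθ (by rw [hη]; exact hc)
    have hB : HasSum (fun n : ℕ => b n * η ^ (-(n : ℤ))) (Complex.exp (θ / η)) := by
      have h1 := NormedSpace.expSeries_div_hasSum_exp (θ / η)
      rw [← Complex.exp_eq_exp_ℂ] at h1
      refine h1.congr_fun fun n => ?_
      rw [hb, div_pow, zpow_neg, zpow_natCast]
      ring
    have hNa : Summable (fun k : ℕ => ‖a k * η ^ k‖) := by
      refine hEa.congr fun k => ?_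
      rw [norm_mul, norm_pow, hη]
    have hNb : Summable (fun n : ℕ => ‖b n * η ^ (-(n : ℤ))‖) := by
      refine hEb.congr fun n => ?_
      rw [norm_mul, norm_zpow, hη]
    have hprod : Summable (fun p : ℕ × ℕ => a p.1 * η ^ p.1 * (b p.2 * η ^ (-(p.2 : ℤ)))) :=
      (hNa.mul_norm hNb).of_norm
    have hAB := (hA.mul hB hprod).mul_right (η ^ ((m : ℤ) - 1))
    refine hAB.congr_fun fun p => ?_
    have hz : η ^ (jj p) = η ^ (p.1 : ℤ) * η ^ (-(p.2 : ℤ)) * η ^ ((m : ℤ) - 1) := by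
      rw [← zpow_add₀ hη0, ← zpow_add₀ hη0, hjj]
      congr 1
      ring
    rw [hz, zpow_natCast]
    ring
  -- continuous family
  have hGc : ∀ p : ℕ × ℕ, Continuous (fun t : ℝ =>
      deriv (circleMap 0 c) t * (a p.1 * b p.2 * (circleMap 0 c t) ^ (jj p))) := by
    intro p
    have h1 : Continuous (circleMap 0 c) := continuous_circleMap 0 c
    have h2 : Continuous (fun t : ℝ => (circleMap 0 c t) ^ (jj p)) :=
      h1.zpow₀ (jj p) fun t => Or.inl (hne t)
    simp only [deriv_circleMap]
    exact (h1.mul continuous_const).mul (continuous_const.mul h2)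
  set G : ℕ × ℕ → C(ℝ, ℂ) := fun p =>
    ⟨fun t => deriv (circleMap 0 c) t * (a p.1 * b p.2 * (circleMap 0 c t) ^ (jj p)), hGc p⟩
    with hG
  -- bound
  set B : ℕ × ℕ → ℝ := fun p =>
    (‖a p.1‖ * c ^ p.1) * ((‖b p.2‖ * c ^ (-(p.2 : ℤ))) * c ^ m) with hB'
  have hBsum : Summable B :=
    hEa.mul_of_nonneg (hEb.mul_right (c ^ m)) (fun k => by positivity) (fun n => by positivity)
  have hGle : ∀ (p : ℕ × ℕ) (t : ℝ), ‖G p t‖ ≤ B p := by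
    intro p t
    have : ‖G p t‖ = c * (‖a p.1‖ * ‖b p.2‖ * c ^ (jj p)) := by
      simp only [hG, ContinuousMap.coe_mk, deriv_circleMap, norm_mul, norm_zpow,
        Complex.norm_I, map_mul, habs t, mul_one]
    rw [this]
    have hceq : c * (‖a p.1‖ * ‖b p.2‖ * c ^ (jj p)) = B p := by
      have hpow : (c : ℝ) ^ (p.1 : ℤ) * c ^ (-(p.2 : ℤ)) * c ^ (m : ℤ) = c * c ^ (jj p) := by
        rw [← zpow_add₀ hc0.ne', ← zpow_add₀ hc0.ne', hjj]
        rw [show (p.1 : ℤ) + -(p.2 : ℤ) + (m : ℤ) = 1 + ((p.1 : ℤ) + m - 1 - p.2) by ring]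
        rw [zpow_add₀ hc0.ne', zpow_one]
      have hre : c * (‖a p.1‖ * ‖b p.2‖ * c ^ (jj p))
          = ‖a p.1‖ * ‖b p.2‖ * (c * c ^ (jj p)) := by ring
      rw [hre, ← hpow, hB']
      simp only [zpow_natCast]
      ring
    rw [hceq]
  have hBnn : ∀ p : ℕ × ℕ, 0 ≤ B p := by
    intro p; rw [hB']; positivity
  have hsumnorm : Summable (fun p : ℕ × ℕ =>
      ‖(G p).restrict (⟨Set.uIcc 0 (2 * Real.pi), isCompact_uIcc⟩ : TopologicalSpace.Compacts ℝ)‖) := by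
    refine Summable.of_nonneg_of_le (fun p => norm_nonneg _) (fun p => ?_) hBsum
    refine (ContinuousMap.norm_le _ (hBnn p)).mpr fun x => ?_
    rw [ContinuousMap.restrict_apply]
    exact hGle p x
  have hInt := intervalIntegral.hasSum_intervalIntegral_of_summable_norm
    (a := 0) (b := 2 * Real.pi) hsumnorm
  -- identify the RHS integral with the circle integral
  have hR : (∫ t in (0:ℝ)..2 * Real.pi, ∑' p : ℕ × ℕ, G p t)
      = ∮ η in C(0, c), (1 - θ * η) ^ β * Complex.exp (θ / η) * η ^ ((m : ℤ) - 1) := by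
    rw [circleIntegral]
    refine intervalIntegral.integral_congr fun t _ => ?_
    have h1 := (hpt (circleMap 0 c t) (habs t)).mul_left (deriv (circleMap 0 c) t)
    have h2 : HasSum (fun p : ℕ × ℕ => G p t)
        (deriv (circleMap 0 c) t • ((1 - θ * circleMap 0 c t) ^ β
          * Complex.exp (θ / circleMap 0 c t) * circleMap 0 c t ^ ((m : ℤ) - 1))) := by
      rw [smul_eq_mul]
      refine h1.congr_fun fun p => ?_
      simp only [hG, ContinuousMap.coe_mk]
    exact h2.tsum_eq
  -- evaluate each circle integral
  set val : ℕ × ℕ → ℂ := fun p =>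
    a p.1 * b p.2 * (if jj p = -1 then (2 * Real.pi * Complex.I) else 0) with hval
  have hL : (fun p : ℕ × ℕ => ∫ t in (0:ℝ)..2 * Real.pi, G p t) = val := by
    funext p
    have hcirc : (∫ t in (0:ℝ)..2 * Real.pi, G p t)
        = ∮ z in C(0, c), a p.1 * b p.2 * z ^ (jj p) := by
      rw [circleIntegral]
      refine intervalIntegral.integral_congr fun t _ => ?_
      simp only [hG, ContinuousMap.coe_mk, smul_eq_mul]
    rw [hcirc, circleIntegral.integral_const_mul, hval]
    congr 1
    by_cases hj : jj p = -1
    · rw [if_pos hj, hj]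
      have h0 : (0 : ℂ) ∈ ball (0 : ℂ) c := mem_ball_self hc0
      have := circleIntegral.integral_sub_inv_of_mem_ball h0
      simp only [sub_zero] at this
      rw [← this]
      congr 1
      funext z
      simp [zpow_neg_one]
    · rw [if_neg hj]
      have := circleIntegral.integral_sub_zpow_of_ne hj 0 0 c
      simpa using this
  rw [hL, hR] at hInt
  -- reduce to the diagonal
  have hinj : Function.Injective (fun k : ℕ => ((k, k + m) : ℕ × ℕ)) := by
    intro x y h
    simpa using congrArg Prod.fst h
  have hvanish : ∀ p : ℕ × ℕ, p ∉ Set.range (fun k : ℕ => ((k, k + m) : ℕ × ℕ)) → val p = 0 := by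
    intro p hp
    have hj : jj p ≠ -1 := by
      intro h
      apply hp
      have h2 : p.2 = p.1 + m := by
        simp only [hjj] at h
        omega
      exact ⟨p.1, by simp [← h2]⟩
    rw [hval]
    simp only [if_neg hj, mul_zero]
  have hdiag := (hinj.hasSum_iff hvanish).mpr hInt
  -- compute the diagonal terms
  set C : ℂ := θ ^ m / (m.factorial : ℂ) * (2 * Real.pi * Complex.I) with hC
  have hterm : ∀ k : ℕ, val (k, k + m)
      = C * (pochhammer' (-β) k * (θ ^ 2) ^ k
          / (pochhammer' (((m + 1 : ℕ)) : ℂ) k * (k.factorial : ℂ))) := by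
    intro k
    have hj : jj (k, k + m) = -1 := by rw [hjj]; push_cast; ring
    rw [hval]
    simp only [hj, if_pos]
    simp only [ha, hb, hC]
    have hkm : k + m = m + k := Nat.add_comm k m
    rw [hkm, ← CCI.pochhammer_factorial m k]
    have h1 : ((k.factorial : ℂ)) ≠ 0 := Nat.cast_ne_zero.mpr k.factorial_ne_zero
    have h2 : ((m.factorial : ℂ)) ≠ 0 := Nat.cast_ne_zero.mpr m.factorial_ne_zero
    have h4 : pochhammer' (((m + 1 : ℕ)) : ℂ) k ≠ 0 := CCI.pochhammer_nat_ne_zero m k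
    field_simp
    ring
  have hCne : C ≠ 0 := by
    rw [hC]
    have h2 : ((m.factorial : ℂ)) ≠ 0 := Nat.cast_ne_zero.mpr m.factorial_ne_zero
    have hpi : (Real.pi : ℂ) ≠ 0 := Complex.ofReal_ne_zero.mpr Real.pi_ne_zero
    have hI : Complex.I ≠ 0 := Complex.I_ne_zero
    have hθm : θ ^ m ≠ 0 := pow_ne_zero m hθ
    field_simp
    exact div_ne_zero (mul_ne_zero (mul_ne_zero (mul_ne_zero hθm two_ne_zero) hpi) hI) h2
  -- transport
  have hdiag' : HasSum (fun k : ℕ => C * (pochhammer' (-β) k * (θ ^ 2) ^ k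
      / (pochhammer' (((m + 1 : ℕ)) : ℂ) k * (k.factorial : ℂ))))
      (∮ η in C(0, c), (1 - θ * η) ^ β * Complex.exp (θ / η) * η ^ ((m : ℤ) - 1)) := by
    refine hdiag.congr_fun fun k => ?_
    exact (hterm k).symm
  have hΦ : HasSum (fun k : ℕ => pochhammer' (-β) k * (θ ^ 2) ^ k
      / (pochhammer' (((m + 1 : ℕ)) : ℂ) k * (k.factorial : ℂ)))
      (C⁻¹ * (∮ η in C(0, c), (1 - θ * η) ^ β * Complex.exp (θ / η) * η ^ ((m : ℤ) - 1))) := by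
    have := hdiag'.mul_left C⁻¹
    refine this.congr_fun fun k => ?_
    rw [inv_mul_cancel_left₀ hCne]
  have hconf : confluentHyp (-β) (m + 1) (θ ^ 2)
      = C⁻¹ * (∮ η in C(0, c), (1 - θ * η) ^ β * Complex.exp (θ / η) * η ^ ((m : ℤ) - 1)) := by
    rw [confluentHyp]
    exact hΦ.tsum_eq
  rw [hconf, hC]
  generalize (∮ η in C(0, c),
      (1 - θ * η) ^ β * Complex.exp (θ / η) * η ^ ((m : ℤ) - 1)) = T
  have h2 : ((m.factorial : ℂ)) ≠ 0 := Nat.cast_ne_zero.mpr m.factorial_ne_zero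
  have hpi : (Real.pi : ℂ) ≠ 0 := Complex.ofReal_ne_zero.mpr Real.pi_ne_zero
  have hθm : θ ^ m ≠ 0 := pow_ne_zero m hθ
  have hI : Complex.I ≠ 0 := Complex.I_ne_zero
  have hx : (θ ^ m / (m.factorial : ℂ) * (2 * (Real.pi : ℂ) * Complex.I))⁻¹
      = (m.factorial : ℂ) / θ ^ m * (2 * (Real.pi : ℂ) * Complex.I)⁻¹ := by
    rw [mul_inv, inv_div]
  have hy : θ ^ m * ((m.factorial : ℂ) / θ ^ m) = (m.factorial : ℂ) := by
    rw [mul_comm, div_mul_cancel₀ _ hθm]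
  have key : ∀ X : ℂ, θ ^ m * ((m.factorial : ℂ) / θ ^ m * X) / (m.factorial : ℂ) = X := by
    intro X
    rw [← mul_assoc, hy, mul_div_cancel_left₀ _ h2]
  rw [hx, mul_assoc ((m.factorial : ℂ) / θ ^ m), key]
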